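/- arXiv:2407.11634 — 3 statements merged into one kernel-verified Lean document; each statement's English description precedes it below -/
import Mathlib

section
/- Let F̄ : [0,∞) → [0,1] be a continuous survival function with F̄(0) = 1, F̄ differentiable, and 0 < F̄(t) < 1 for all t > 0. If there exists a constant λ > 0 such that ∫₀ᵗ F̄²(u) du = λ(1 - F̄²(t)) for all t > 0, then F̄(t) = e^{-t/(2λ)} for all t ≥ 0. -/
open Real intervalIntegral

/-- If a continuous differentiable survival function `F̄` with `F̄ 0 = 1` and
`0 < F̄ t < 1` for all `t > 0` satisfies `∫₀ᵗ F̄² = λ (1 - F̄²(t))` for all `t > 0`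
with a constant `λ > 0`, then `F̄ t = exp (-t/(2λ))` for all `t ≥ 0`. -/
theorem constant_ndse_implies_exponential
    (Fbar : ℝ → ℝ) (hcont : Continuous Fbar) (hdiff : Differentiable ℝ Fbar)
    (h0 : Fbar 0 = 1) (hrange : ∀ t > 0, 0 < Fbar t ∧ Fbar t < 1)
    (l : ℝ) (hl : 0 < l)
    (hconst : ∀ t > 0, (∫ u in (0:ℝ)..t, (Fbar u)^2) = l * (1 - (Fbar t)^2)) :
    ∀ t ≥ 0, Fbar t = Real.exp (-t / (2 * l)) := by
  set G : ℝ → ℝ := fun t => ∫ u in (0:ℝ)..t, (Fbar u)^2 with hG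
  have hcontsq : Continuous fun u => (Fbar u)^2 := hcont.pow 2
  have hFTC : ∀ t : ℝ, HasDerivAt G ((Fbar t)^2) t := fun t =>
    (hcontsq.integral_hasStrictDerivAt 0 t).hasDerivAt
  -- the key algebraic identity, valid on all of [0,∞)
  have hkey : ∀ t ≥ 0, (Fbar t)^2 = (l - G t) / l := by
    intro t ht
    rcases eq_or_lt_of_le ht with h | h
    · simp [hG, ← h, h0, div_self hl.ne']
    · have := hconst t h
      field_simp [hG]
      linarith [this]
  -- ψ := (l - G) * exp(t/l) has zero derivative on [0,∞)
  set ψ : ℝ → ℝ := fun t => (l - G t) * Real.exp (t / l) with hψ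
  have hψderiv : ∀ t ≥ 0, HasDerivAt ψ 0 t := by
    intro t ht
    have h1 : HasDerivAt (fun t => l - G t) (-(Fbar t)^2) t := by
      exact ((hasDerivAt_const t l).sub (hFTC t)).congr_deriv (by ring)
    have h2 : HasDerivAt (fun t => Real.exp (t / l)) (Real.exp (t / l) * (1 / l)) t := by
      have := (Real.hasDerivAt_exp (t / l)).comp t
        ((hasDerivAt_id t).div_const l)
      exact this
    have := h1.mul h2
    refine this.congr_deriv ?_
    have hk := hkey t ht
    rw [hk, div_eq_mul_inv]
    ring
  have hψconst : ∀ t ≥ 0, ψ t = l := by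
    intro t ht
    have hGcont : Continuous G := by
      rw [continuous_iff_continuousAt]
      exact fun x => (hFTC x).continuousAt
    have hc : ContinuousOn ψ (Set.Icc 0 t) :=
      (((continuous_const.sub hGcont).mul
        ((Real.continuous_exp.comp (continuous_id.div_const l)))).continuousOn)
    have := constant_of_has_deriv_right_zero hc
      (fun x hx => ((hψderiv x hx.1).hasDerivWithinAt)) t (Set.mem_Icc.mpr ⟨ht, le_refl t⟩)
    simpa [hψ, hG] using this
  intro t ht
  have hq : (Fbar t)^2 = Real.exp (-t / l) := by
    have h1 := hψconst t ht
    have h2 := hkey t ht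
    have hexp : Real.exp (t / l) ≠ 0 := (Real.exp_pos _).ne'
    have h3 : l - G t = l / Real.exp (t / l) := (eq_div_iff hexp).mpr h1
    have hrw : Real.exp (-t / l) = (Real.exp (t / l))⁻¹ := by
      rw [← Real.exp_neg]; ring_nf
    rw [h2, h3, hrw]
    field_simp
  have hpos : 0 ≤ Fbar t := by
    rcases eq_or_lt_of_le ht with h | h
    · simp [← h, h0]
    · exact (hrange t h).1.le
  have hsq : (Real.exp (-t / (2 * l)))^2 = Real.exp (-t / l) := by
    rw [sq, ← Real.exp_add]
    congr 1
    field_simp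
    ring
  have hepos : 0 < Real.exp (-t / (2 * l)) := Real.exp_pos _
  nlinarith [hq, hsq, hpos, hepos]
end

section
/- The NDSE is constant in t if and only if X is exponentially distributed: for a nonnegative continuous random variable X with differentiable survival function F̄ satisfying F̄(0) = 1 and 0 < F̄(t) < 1 for t > 0, the function η(t) = -(1/2)·(∫₀ᵗ F̄²(u) du)/(1 - F̄²(t)) is constant on (0,∞) if and only if there exists β > 0 such that F̄(t) = e^{-βt} for all t ≥ 0. -/
open Real intervalIntegral

lemma exp_integral_aux (a t : ℝ) (ha : a ≠ 0) :
    (∫ u in (0:ℝ)..t, Real.exp (a * u)) = (Real.exp (a * t) - 1) / a := by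
  have D : ∀ x : ℝ, HasDerivAt (fun y : ℝ => Real.exp (a * y) / a) (Real.exp (a * x)) x := by
    intro x
    have h1 : HasDerivAt (fun y : ℝ => a * y) a x := by
      simpa using (hasDerivAt_id x).const_mul a
    have h2 := ((Real.hasDerivAt_exp (a * x)).comp x h1).div_const a
    refine h2.congr_deriv ?_
    field_simp
  rw [intervalIntegral.integral_eq_sub_of_hasDerivAt (fun x _ => D x)
    ((Real.continuous_exp.comp (continuous_const.mul continuous_id)).intervalIntegrable 0 t)]
  simp [sub_div]

/-- The NDSE `η(t) = -(1/2) (∫₀ᵗ F̄²)/(1 - F̄²(t))` is constant on `(0,∞)` if and only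
if `X` is exponentially distributed, i.e. `F̄ t = exp (-β t)` for some `β > 0`. -/
theorem ndse_constant_iff_exponential
    (Fbar : ℝ → ℝ) (hdiff : Differentiable ℝ Fbar)
    (h0 : Fbar 0 = 1) (hrange : ∀ t > 0, 0 < Fbar t ∧ Fbar t < 1) :
    (∃ c : ℝ, ∀ t > 0,
        -(1/2) * (∫ u in (0:ℝ)..t, (Fbar u)^2) / (1 - (Fbar t)^2) = c)
      ↔ (∃ β : ℝ, 0 < β ∧ ∀ t ≥ 0, Fbar t = Real.exp (-β * t)) := by
  have hcont : Continuous Fbar := hdiff.continuous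
  have hcont2 : Continuous fun u => (Fbar u)^2 := hcont.pow 2
  constructor
  · rintro ⟨c, hc⟩
    set G : ℝ → ℝ := fun t => ∫ u in (0:ℝ)..t, (Fbar u)^2 with hGdef
    have hGder : ∀ t : ℝ, HasDerivAt G ((Fbar t)^2) t := fun t =>
      intervalIntegral.integral_hasDerivAt_right (hcont2.intervalIntegrable 0 t)
        hcont2.aestronglyMeasurable.stronglyMeasurableAtFilter hcont2.continuousAt
    -- 1 - Fbar t ^ 2 > 0 for t > 0
    have hpos : ∀ t > 0, 0 < 1 - (Fbar t)^2 := by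
      intro t ht
      obtain ⟨h1, h2⟩ := hrange t ht
      nlinarith
    -- key functional equation
    have hkey : ∀ t > 0, G t = -2*c*(1 - (Fbar t)^2) := by
      intro t ht
      have h := hc t ht
      have hne : (1 - (Fbar t)^2) ≠ 0 := ne_of_gt (hpos t ht)
      field_simp at h
      linarith
    -- c < 0
    have hG1pos : 0 < G 1 := by
      apply intervalIntegral.intervalIntegral_pos_of_pos_on
        (hcont2.intervalIntegrable 0 1)
      · intro x hx
        have := (hrange x hx.1).1
        positivity
      · norm_num
    have hcneg : c < 0 := by
      have h := hc 1 one_pos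
      have h1 := hpos 1 one_pos
      rw [← h]
      have : (0:ℝ) < -(1/2) * G 1 / (1 - Fbar 1 ^ 2) * (-1) := by
        rw [show -(1/2) * G 1 / (1 - Fbar 1 ^ 2) * (-1) = (1/2) * G 1 / (1 - Fbar 1 ^ 2) by ring]
        positivity
      nlinarith
    set β : ℝ := -1/(4*c) with hβdef
    have hβpos : 0 < β := by
      have h0' : (0:ℝ) < -(4*c) := by linarith
      have h1 : (0:ℝ) < 1/(-(4*c)) := one_div_pos.mpr h0'
      have h2 : β = 1/(-(4*c)) := by rw [hβdef]; ring
      linarith [h2 ▸ h1]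
    refine ⟨β, hβpos, ?_⟩
    have hcne : c ≠ 0 := ne_of_lt hcneg
    -- the ODE
    have hode : ∀ t > 0, deriv Fbar t = -β * Fbar t := by
      intro t ht
      have hφ0 : ∀ s ∈ Set.Ioi (0:ℝ), G s + 2*c*(1 - (Fbar s)^2) = (0:ℝ) := by
        intro s hs; have := hkey s hs; linarith
      have hF : HasDerivAt Fbar (deriv Fbar t) t := (hdiff t).hasDerivAt
      have hsq : HasDerivAt (fun s => (Fbar s)^2) (2 * Fbar t * deriv Fbar t) t := by
        simpa using hF.fun_pow 2
      have hd1 : HasDerivAt (fun s => G s + 2*c*(1 - (Fbar s)^2))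
          ((Fbar t)^2 + 2*c*(0 - 2 * Fbar t * deriv Fbar t)) t :=
        (hGder t).add (((hasDerivAt_const t (1:ℝ)).sub hsq).const_mul (2*c))
      have hd2 : HasDerivAt (fun s => G s + 2*c*(1 - (Fbar s)^2)) 0 t := by
        have hmem : Set.Ioi (0:ℝ) ∈ nhds t := (isOpen_Ioi).mem_nhds ht
        have heq : (fun s => G s + 2*c*(1-(Fbar s)^2)) =ᶠ[nhds t] (fun _ => (0:ℝ)) :=
          Filter.eventuallyEq_of_mem hmem hφ0
        exact (hasDerivAt_const t (0:ℝ)).congr_of_eventuallyEq heq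
      have huniq := hd1.unique hd2
      have hft := (hrange t ht).1
      have hfac : Fbar t * (Fbar t - 4*c*deriv Fbar t) = 0 := by linear_combination huniq
      rcases mul_eq_zero.mp hfac with h | h
      · exact absurd h (ne_of_gt hft)
      · rw [hβdef]
        field_simp
        linarith
    set g : ℝ → ℝ := fun s => Fbar s * Real.exp (β * s) with hgdef
    have hgcont : Continuous g :=
      hcont.mul (Real.continuous_exp.comp (continuous_const.mul continuous_id))
    have hgzero : ∀ s > 0, HasDerivAt g 0 s := by
      intro s hs
      have hm : HasDerivAt (fun y : ℝ => β * y) β s := by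
        simpa using (hasDerivAt_id s).const_mul β
      have h1 : HasDerivAt (fun y : ℝ => Real.exp (β*y)) (Real.exp (β*s) * β) s := hm.exp
      have h2 := (hdiff s).hasDerivAt.mul h1
      rw [hode s hs] at h2
      refine h2.congr_deriv ?_
      ring
    have hgconst : ∀ t > 0, g t = g 0 := by
      intro t ht
      have hgt : ∀ s ∈ Set.Ioo (0:ℝ) t, g s = g t := by
        intro s hs
        have hcg : ContinuousOn g (Set.Icc s t) := hgcont.continuousOn
        have := constant_of_has_deriv_right_zero hcg
          (fun x hx => ((hgzero x (lt_of_lt_of_le hs.1 hx.1)).hasDerivWithinAt))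
          t (Set.right_mem_Icc.mpr hs.2.le)
        exact this.symm
      have hne : (nhdsWithin (0:ℝ) (Set.Ioo 0 t)).NeBot := left_nhdsWithin_Ioo_neBot ht
      have hlim1 : Filter.Tendsto g (nhdsWithin 0 (Set.Ioo 0 t)) (nhds (g 0)) :=
        (hgcont.tendsto 0).mono_left nhdsWithin_le_nhds
      have hlim2 : Filter.Tendsto g (nhdsWithin 0 (Set.Ioo 0 t)) (nhds (g t)) := by
        apply Filter.Tendsto.congr' ?_ tendsto_const_nhds
        filter_upwards [self_mem_nhdsWithin] with x hx
        exact (hgt x hx).symm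
      exact (tendsto_nhds_unique hlim1 hlim2).symm
    intro t ht
    rcases eq_or_lt_of_le ht with h | h
    · rw [← h]; simp [h0]
    · have hg0 : g 0 = 1 := by simp [hgdef, h0]
      have hgt1 : Fbar t * Real.exp (β*t) = 1 := by
        have := hgconst t h
        rw [hg0] at this
        exact this
      have : Fbar t = (Real.exp (β*t))⁻¹ := eq_inv_of_mul_eq_one_left ?_
      · rw [this, ← Real.exp_neg]
        ring_nf
      · exact hgt1
  · rintro ⟨β, hβ, hf⟩
    refine ⟨-(1/(4*β)), fun t ht => ?_⟩
    have hft : Fbar t = Real.exp (-β * t) := hf t ht.le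
    have hint : (∫ u in (0:ℝ)..t, (Fbar u)^2) = ∫ u in (0:ℝ)..t, Real.exp ((-2*β) * u) := by
      apply intervalIntegral.integral_congr
      intro u hu
      rw [Set.uIcc_of_le ht.le] at hu
      show Fbar u ^ 2 = Real.exp (-2*β*u)
      rw [hf u hu.1, sq, ← Real.exp_add]
      ring_nf
    rw [hint, exp_integral_aux _ _ (ne_of_lt (by nlinarith : -2*β < 0))]
    have h2 : (Fbar t)^2 = Real.exp ((-2*β) * t) := by
      rw [hft, sq, ← Real.exp_add]; ring_nf
    rw [h2]
    have hlt : Real.exp ((-2*β) * t) < 1 := by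
      rw [Real.exp_lt_one_iff]; nlinarith
    have hne : 1 - Real.exp ((-2*β)*t) ≠ 0 := by linarith
    have hβne : β ≠ 0 := ne_of_gt hβ
    rw [div_eq_iff hne]
    field_simp
    ring
end

section
/- For the age replacement model with replacement time t > 0, the cumulative residual extropy of the random variable X_{[t]} with survival function R_t(x) = Σ_{n=0}^∞ F̄ⁿ(t)·F̄(x − nt)·1_{[nt,(n+1)t)}(x) equals the NDSE of X: -(1/2)∫₀^∞ R_t²(x) dx = -(1/2)·(∫₀ᵗ F̄²(u) du)/(1 - F̄²(t)). -/
open Real MeasureTheory Set intervalIntegral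

/-- The cumulative residual extropy of the age replacement model survival function
`R_t(x) = ∑ₙ F̄(t)ⁿ F̄(x - n t) 1_{[nt,(n+1)t)}(x)` equals the NDSE of `X`:
`-(1/2) ∫₀^∞ R_t² = -(1/2) (∫₀ᵗ F̄²)/(1 - F̄²(t))`. -/
theorem crj_age_replacement_eq_ndse
    (Fbar : ℝ → ℝ) (t : ℝ) (ht : 0 < t)
    (hF : 0 < Fbar t ∧ Fbar t < 1)
    (R : ℝ → ℝ)
    (hR : ∀ x : ℝ, R x =
      ∑' n : ℕ, (Fbar t) ^ n * Fbar (x - n * t) *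
        Set.indicator (Set.Ico ((n : ℝ) * t) ((n + 1 : ℝ) * t)) (fun _ => (1 : ℝ)) x) :
    -(1/2) * ∫ x in Set.Ioi (0:ℝ), (R x)^2
      = -(1/2) * (∫ u in (0:ℝ)..t, (Fbar u)^2) / (1 - (Fbar t)^2) := by
  obtain ⟨hc0, hc1⟩ := hF
  set c := Fbar t with hc
  have hc2 : c ^ 2 < 1 := pow_lt_one₀ hc0.le hc1 two_ne_zero
  have hc2' : (0:ℝ) < 1 - c ^ 2 := by linarith
  -- pointwise value of R on open subintervals
  have hRval : ∀ (n : ℕ), ∀ x ∈ Ioo ((n : ℝ) * t) (((n : ℝ) + 1) * t),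
      R x = c ^ n * Fbar (x - n * t) := by
    intro n x hx
    rw [hR x]
    have key : ∀ m : ℕ, m ≠ n →
        (c) ^ m * Fbar (x - m * t) *
          Set.indicator (Set.Ico ((m : ℝ) * t) ((m + 1 : ℝ) * t)) (fun _ => (1:ℝ)) x = 0 := by
      intro m hm
      have hx' : x ∉ Set.Ico ((m : ℝ) * t) ((m + 1 : ℝ) * t) := by
        rcases lt_or_gt_of_ne hm with h | h
        · -- m < n : (m+1)*t ≤ n*t < x
          intro hmem
          have h1 : ((m:ℝ) + 1) ≤ (n:ℝ) := by exact_mod_cast h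
          have : ((m:ℝ) + 1) * t ≤ (n:ℝ) * t := by nlinarith
          exact absurd hmem.2 (by push_cast; linarith [hx.1])
        · -- n < m : x < (n+1)*t ≤ m*t
          intro hmem
          have h1 : ((n:ℝ) + 1) ≤ (m:ℝ) := by exact_mod_cast h
          have : ((n:ℝ) + 1) * t ≤ (m:ℝ) * t := by nlinarith
          exact absurd hmem.1 (by push_cast; linarith [hx.2])
      rw [Set.indicator_of_notMem hx', mul_zero]
    rw [tsum_eq_single n key]
    have hxmem : x ∈ Set.Ico ((n : ℝ) * t) ((n + 1 : ℝ) * t) := by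
      constructor
      · exact hx.1.le
      · push_cast; exact hx.2
    rw [Set.indicator_of_mem hxmem, mul_one]
  -- a.e. statement ignoring the right endpoint of each Ioc
  have hpt : ∀ p : ℝ, ∀ᵐ x : ℝ, x ≠ p := fun p => by
    have : volume ({p} : Set ℝ) = 0 := Real.volume_singleton
    exact (ae_iff).2 (by simpa using this)
  -- In the non-integrable case both sides are zero
  by_cases hInt : IntegrableOn (fun u => (Fbar u)^2) (Set.Ioc (0:ℝ) t) volume
  · -- main case
    set I := ∫ u in (0:ℝ)..t, (Fbar u)^2 with hI
    have hIt : IntervalIntegrable (fun u => (Fbar u)^2) volume 0 t :=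
      (intervalIntegrable_iff_integrableOn_Ioc_of_le ht.le).2 hInt
    set S : ℕ → Set ℝ := fun n => Set.Ioc ((n : ℝ) * t) (((n : ℝ) + 1) * t) with hS
    have hSle : ∀ n : ℕ, (n : ℝ) * t ≤ ((n : ℝ) + 1) * t := fun n => by nlinarith
    have hSmeas : ∀ n, MeasurableSet (S n) := fun n => measurableSet_Ioc
    have hSdisj : Pairwise (Function.onFun Disjoint S) := by
      intro m n hmn
      rcases lt_or_gt_of_ne hmn with h | h
      · refine Set.Ioc_disjoint_Ioc.2 ?_
        have h1 : ((m:ℝ) + 1) ≤ (n:ℝ) := by exact_mod_cast h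
        refine le_trans (min_le_left _ _) (le_trans ?_ (le_max_right _ _))
        nlinarith
      · refine Set.Ioc_disjoint_Ioc.2 ?_
        have h1 : ((n:ℝ) + 1) ≤ (m:ℝ) := by exact_mod_cast h
        refine le_trans (min_le_right _ _) (le_trans ?_ (le_max_left _ _))
        nlinarith
    have hUnion : Set.Ioi (0:ℝ) = ⋃ n, S n := by
      ext x
      simp only [Set.mem_Ioi, Set.mem_iUnion, hS, Set.mem_Ioc]
      constructor
      · intro hx
        set q := x / t with hq
        have hq0 : 0 < q := div_pos hx ht
        have hceil : (1:ℤ) ≤ ⌈q⌉ := by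
          exact_mod_cast Int.ceil_pos.2 hq0
        refine ⟨(⌈q⌉ - 1).toNat, ?_, ?_⟩
        · have hcast : (((⌈q⌉ - 1).toNat : ℤ) : ℝ) = ((⌈q⌉ : ℝ) - 1) := by
            rw [Int.toNat_of_nonneg (by omega)]; push_cast; ring
          have h1 : (⌈q⌉ : ℝ) - 1 < q := by
            have := Int.ceil_lt_add_one (R := ℝ) q
            linarith
          have : (((⌈q⌉ - 1).toNat : ℝ)) * t < q * t := by
            apply mul_lt_mul_of_pos_right _ ht
            calc (((⌈q⌉ - 1).toNat : ℝ)) = (((⌈q⌉ - 1).toNat : ℤ) : ℝ) := by push_cast; ring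
            _ = (⌈q⌉ : ℝ) - 1 := hcast
            _ < q := h1
          calc (((⌈q⌉ - 1).toNat : ℝ)) * t < q * t := this
          _ = x := by rw [hq, div_mul_cancel₀ _ ht.ne']
        · have hcast : (((⌈q⌉ - 1).toNat : ℤ) : ℝ) = ((⌈q⌉ : ℝ) - 1) := by
            rw [Int.toNat_of_nonneg (by omega)]; push_cast; ring
          have h2 : q ≤ (⌈q⌉ : ℝ) := Int.le_ceil q
          have : q * t ≤ ((((⌈q⌉ - 1).toNat : ℝ)) + 1) * t := by
            apply mul_le_mul_of_nonneg_right _ ht.le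
            have : (((⌈q⌉ - 1).toNat : ℝ)) = (⌈q⌉ : ℝ) - 1 := by
              rw [show (((⌈q⌉ - 1).toNat : ℝ)) = (((⌈q⌉ - 1).toNat : ℤ) : ℝ) by push_cast; ring, hcast]
            linarith
          calc x = q * t := by rw [hq, div_mul_cancel₀ _ ht.ne']
          _ ≤ ((((⌈q⌉ - 1).toNat : ℝ)) + 1) * t := this
      · rintro ⟨n, hn1, _⟩
        have : (0:ℝ) ≤ (n:ℝ) * t := by positivity
        linarith
    -- piece-wise a.e. equality
    have haeq : ∀ n : ℕ, ∀ᵐ x : ℝ, x ∈ Set.uIoc ((n:ℝ)*t) (((n:ℝ)+1)*t) →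
        (R x)^2 = (c ^ n * Fbar (x - n * t))^2 := by
      intro n
      filter_upwards [hpt (((n:ℝ)+1)*t)] with x hx hmem
      rw [Set.uIoc_of_le (hSle n)] at hmem
      have : x ∈ Ioo ((n:ℝ)*t) (((n:ℝ)+1)*t) := ⟨hmem.1, lt_of_le_of_ne hmem.2 hx⟩
      rw [hRval n x this]
    -- interval integrability of the model piece
    have hIn : ∀ n : ℕ, IntervalIntegrable (fun x => (c ^ n * Fbar (x - n * t))^2)
        volume ((n:ℝ)*t) (((n:ℝ)+1)*t) := by
      intro n
      have h1 := (hIt.comp_sub_right ((n:ℝ)*t)).const_mul ((c ^ n)^2)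
      have h2 : (0:ℝ) + (n:ℝ)*t = (n:ℝ)*t := by ring
      have h3 : t + (n:ℝ)*t = ((n:ℝ)+1)*t := by ring
      rw [h2, h3] at h1
      refine h1.congr_ae ?_
      filter_upwards with x
      rw [mul_pow]
    have hInR : ∀ n : ℕ, IntervalIntegrable (fun x => (R x)^2)
        volume ((n:ℝ)*t) (((n:ℝ)+1)*t) := by
      intro n
      refine (hIn n).congr_ae ?_
      have hm := ae_restrict_mem (μ := volume) (measurableSet_uIoc :
        MeasurableSet (Set.uIoc ((n:ℝ)*t) (((n:ℝ)+1)*t)))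
      filter_upwards [hm, ae_restrict_of_ae (haeq n)] with x hx h
      exact (h hx).symm
    -- value of the piece integrals
    have hval : ∀ n : ℕ, (∫ x in S n, (R x)^2) = (c^2)^n * I := by
      intro n
      rw [hS]
      rw [← intervalIntegral.integral_of_le (hSle n)]
      rw [intervalIntegral.integral_congr_ae (haeq n)]
      have : (∫ x in ((n:ℝ)*t)..(((n:ℝ)+1)*t), (c ^ n * Fbar (x - n * t))^2)
          = (c^2)^n * ∫ x in ((n:ℝ)*t)..(((n:ℝ)+1)*t), (Fbar (x - n * t))^2 := by
        rw [← intervalIntegral.integral_const_mul]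
        congr 1; funext x; rw [mul_pow, ← pow_mul, ← pow_mul, Nat.mul_comm]
      rw [this]
      congr 1
      rw [intervalIntegral.integral_comp_sub_right (fun u => (Fbar u)^2) ((n:ℝ)*t)]
      have h2 : (n:ℝ)*t - (n:ℝ)*t = 0 := by ring
      have h3 : ((n:ℝ)+1)*t - (n:ℝ)*t = t := by ring
      rw [h2, h3]
    -- integrability on the union
    have hIoc : ∀ n : ℕ, IntegrableOn (fun x => (R x)^2) (S n) volume := fun n =>
      (intervalIntegrable_iff_integrableOn_Ioc_of_le (hSle n)).1 (hInR n)
    have hInorm : ∀ n : ℕ, (∫ x in S n, ‖(R x)^2‖) = (c^2)^n * I := by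
      intro n
      rw [← hval n]
      congr 1; funext x
      rw [Real.norm_eq_abs, abs_of_nonneg (sq_nonneg _)]
    have hsum : Summable (fun n : ℕ => ∫ x in S n, ‖(R x)^2‖) := by
      apply Summable.congr ((summable_geometric_of_lt_one (by positivity) hc2).mul_right I)
      intro n
      rw [hInorm n]
    have hIntU : IntegrableOn (fun x => (R x)^2) (⋃ n, S n) volume :=
      integrableOn_iUnion_of_summable_integral_norm hIoc hsum
    have hfinal : (∫ x in Set.Ioi (0:ℝ), (R x)^2) = (1 - c^2)⁻¹ * I := by
      rw [hUnion, integral_iUnion hSmeas hSdisj hIntU]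
      rw [tsum_congr hval, tsum_mul_right, tsum_geometric_of_lt_one (by positivity) hc2]
    rw [hfinal]
    rw [div_eq_mul_inv]
    ring
  · -- non-integrable case: both sides vanish
    have hRHS : (∫ u in (0:ℝ)..t, (Fbar u)^2) = 0 := by
      apply intervalIntegral.integral_undef
      rw [intervalIntegrable_iff_integrableOn_Ioc_of_le ht.le]
      exact hInt
    have hLHS : (∫ x in Set.Ioi (0:ℝ), (R x)^2) = 0 := by
      apply MeasureTheory.integral_undef
      intro h
      apply hInt
      have h1 : IntegrableOn (fun x => (R x)^2) (Set.Ioc (0:ℝ) t) volume :=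
        MeasureTheory.IntegrableOn.mono_set h (Set.Ioc_subset_Ioi_self)
      refine h1.congr ?_
      have hmem := ae_restrict_mem (μ := volume) (measurableSet_Ioc : MeasurableSet (Set.Ioc (0:ℝ) t))
      filter_upwards [hmem, ae_restrict_of_ae (hpt t)] with x hx hxt
      have hxo : x ∈ Ioo (((0:ℕ):ℝ)*t) ((((0:ℕ):ℝ)+1)*t) := by
        simp only [Nat.cast_zero, zero_mul, zero_add, one_mul]
        exact ⟨hx.1, lt_of_le_of_ne hx.2 hxt⟩
      have := hRval 0 x hxo
      simp only [Nat.cast_zero, pow_zero, one_mul, zero_mul, sub_zero] at this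
      rw [this]
    rw [hRHS, hLHS]
    ring
end
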